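/- Let μ be a discrete probability measure with support points y^1,…,y^{Nm} and let an m-point Gauss quadrature rule with points x^1,…,x^m approximate μ. Suppose there exist points z^1,…,z^m such that |z^i − y^j| ≤ δ for all j with (i−1)N+1 ≤ j ≤ iN. Let R = max of all |z^i| and |y^j|. Then for every φ ∈ C^{2m}(ℝ), the quadrature error satisfies |E(φ)| ≤ δ (2R)^{2m−1} (1/(2m)!) sup_{x∈(−R,R)} |φ^{(2m)}(x)|. -/

import Mathlib

open Finset

private lemma polyeval_contDiff (p : Polynomial ℝ) {n : WithTop ℕ∞} :
    ContDiff ℝ n fun t : ℝ => p.eval t := by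
  induction p using Polynomial.induction_on' with
  | add p q hp hq => simpa using hp.add hq
  | monomial k a =>
      simpa [Polynomial.eval_monomial] using (contDiff_const (c := a)).mul (contDiff_id.pow k)

private lemma contDiff_deriv_of_succ {f : ℝ → ℝ} {k : ℕ} (h : ContDiff ℝ (k + 1 : ℕ) f) :
    ContDiff ℝ (k : ℕ) (deriv f) := by
  have h' : ContDiff ℝ ((k : WithTop ℕ∞) + 1) f := by exact_mod_cast h
  exact (contDiff_succ_iff_deriv.mp h').2.2

private lemma iterate_derivative_add' (p q : Polynomial ℝ) (k : ℕ) :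
    Polynomial.derivative^[k] (p + q) =
      Polynomial.derivative^[k] p + Polynomial.derivative^[k] q := by
  induction k generalizing p q with
  | zero => simp
  | succ k ih =>
      simp only [Function.iterate_succ_apply, Polynomial.derivative_add, ih]

private lemma iteratedDeriv_poly_sub_mul (k : ℕ) :
    ∀ (q : Polynomial ℝ) (c : ℝ) (f : ℝ → ℝ), ContDiff ℝ (k : ℕ) f →
    iteratedDeriv k (fun t => q.eval t - c * f t) =
      fun t => (Polynomial.derivative^[k] q).eval t - c * iteratedDeriv k f t := by
  induction k with
  | zero => intro q c f hf; simp
  | succ k ih =>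
      intro q c f hf
      have hdf : Differentiable ℝ f :=
        hf.differentiable (by simp)
      have hder : deriv (fun t => q.eval t - c * f t)
          = fun t => (Polynomial.derivative q).eval t - c * deriv f t := by
        funext t
        rw [deriv_fun_sub (Polynomial.differentiableAt _) ((hdf t).const_mul c),
          deriv_const_mul c (hdf t), Polynomial.deriv]
      rw [iteratedDeriv_succ', hder, ih _ c (deriv f) (contDiff_deriv_of_succ hf)]
      funext t
      rw [Function.iterate_succ_apply, iteratedDeriv_succ']

private lemma iterate_derivative_of_natDegree_le (p : Polynomial ℝ) (n : ℕ)
    (h : p.natDegree ≤ n) :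
    Polynomial.derivative^[n] p = Polynomial.C ((n.factorial : ℝ) * p.coeff n) := by
  have hd : (Polynomial.derivative^[n] p).natDegree = 0 :=
    Nat.le_zero.mp ((p.natDegree_iterate_derivative n).trans (by omega))
  rw [Polynomial.eq_C_of_natDegree_le_zero hd.le, Polynomial.coeff_iterate_derivative]
  norm_num [Nat.descFactorial_self, nsmul_eq_mul]

private lemma aux_rolle_iter : ∀ (n : ℕ) (f : ℝ → ℝ), ContDiff ℝ (n + 1 : ℕ) f →
    ∀ a : Fin (n + 2) → ℝ, StrictMono a → (∀ k, f (a k) = 0) →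
    ∃ ξ ∈ Set.Ioo (a 0) (a (Fin.last (n + 1))), iteratedDeriv (n + 1) f ξ = 0 := by
  intro n
  induction n with
  | zero =>
      intro f hf a ha h0
      have hlt : a 0 < a 1 := ha (by decide : (0 : Fin 2) < 1)
      obtain ⟨c, hc, hc0⟩ := exists_deriv_eq_zero hlt hf.continuous.continuousOn
        (by rw [h0 0, h0 1])
      exact ⟨c, by simpa [Fin.last] using hc, by simpa [iteratedDeriv_one] using hc0⟩
  | succ n ih =>
      intro f hf a ha h0
      have hb : ∀ k : Fin (n + 2), ∃ c ∈ Set.Ioo (a k.castSucc) (a k.succ), deriv f c = 0 := by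
        intro k
        exact exists_deriv_eq_zero (ha (Fin.castSucc_lt_succ : k.castSucc < k.succ)) hf.continuous.continuousOn
          (by rw [h0 _, h0 _])
      choose b hb1 hb2 using hb
      have hbmono : StrictMono b := by
        intro k l hkl
        have h1 : (k.succ : Fin (n + 3)) ≤ l.castSucc := by
          simp only [Fin.le_def, Fin.val_succ, Fin.coe_castSucc]
          exact hkl
        calc b k < a k.succ := (hb1 k).2
          _ ≤ a l.castSucc := ha.monotone h1
          _ < b l := (hb1 l).1
      obtain ⟨ξ, hξ, h0'⟩ := ih (deriv f) (contDiff_deriv_of_succ hf) b hbmono hb2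
      refine ⟨ξ, ⟨?_, ?_⟩, ?_⟩
      · have h1 : a 0 < b 0 := by
          have := (hb1 0).1
          simpa using this
        exact lt_trans h1 hξ.1
      · have h2 : b (Fin.last (n + 1)) < a (Fin.last (n + 2)) := by
          have := (hb1 (Fin.last (n + 1))).2
          simpa [Fin.succ_last] using this
        exact lt_trans hξ.2 h2
      · rw [iteratedDeriv_succ']
        exact h0'

private lemma aux_rolle_finset (n : ℕ) (f : ℝ → ℝ) (hf : ContDiff ℝ (n + 1 : ℕ) f)
    (s : Finset ℝ) (hcard : s.card = n + 2) (h0 : ∀ u ∈ s, f u = 0) :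
    ∃ ξ, (∃ u ∈ s, u < ξ) ∧ (∃ u ∈ s, ξ < u) ∧ iteratedDeriv (n + 1) f ξ = 0 := by
  set e := s.orderIsoOfFin hcard with he
  set a : Fin (n + 2) → ℝ := fun k => (e k : ℝ) with haa
  have hmem : ∀ k, a k ∈ s := fun k => (e k).2
  have hmono : StrictMono a := fun i j h => by
    have := e.strictMono h
    exact_mod_cast this
  obtain ⟨ξ, hξ, hd⟩ := aux_rolle_iter n f hf a hmono (fun k => h0 _ (hmem k))
  exact ⟨ξ, ⟨a 0, hmem 0, hξ.1⟩, ⟨a (Fin.last (n + 1)), hmem _, hξ.2⟩, hd⟩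

/-- Gauss quadrature error estimate for a discrete measure whose `N·m` support
points cluster within `δ` of `m` points `z i`. -/
theorem gauss_quadrature_clustered_error
    (N m : ℕ) (hN : 0 < N) (hm : 0 < m)
    (v : Fin m → Fin N → ℝ) (y : Fin m → Fin N → ℝ)
    (w : Fin m → ℝ) (x : Fin m → ℝ) (z : Fin m → ℝ)
    (δ R C : ℝ) (hδ : 0 ≤ δ) (hR : 0 < R)
    (hv : ∀ i j, 0 < v i j) (hvsum : ∑ i, ∑ j, v i j = 1)
    (hw : ∀ i, 0 < w i) (hwsum : ∑ i, w i = 1)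
    (hexact : ∀ p : Polynomial ℝ, p.natDegree ≤ 2 * m - 1 →
      ∑ i, w i * p.eval (x i) = ∑ i, ∑ j, v i j * p.eval (y i j))
    (hcluster : ∀ i j, |z i - y i j| ≤ δ)
    (hzR : ∀ i, |z i| ≤ R) (hyR : ∀ i j, |y i j| ≤ R)
    (φ : ℝ → ℝ) (hφ : ContDiff ℝ (2 * m) φ)
    (hC : ∀ t ∈ Set.Ioo (-R) R, |iteratedDeriv (2 * m) φ t| ≤ C) :
    |(∑ i, ∑ j, v i j * φ (y i j)) - ∑ i, w i * φ (x i)| ≤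
      δ * (2 * R) ^ (2 * m - 1) * (1 / (Nat.factorial (2 * m) : ℝ)) * C := by
  classical
  have hC0 : 0 ≤ C := le_trans (abs_nonneg _) (hC 0 ⟨neg_lt_zero.mpr hR, hR⟩)
  -- Step 1: the quadrature nodes are in [-R, R].
  have hxR : ∀ k, |x k| ≤ R := by
    intro k
    by_contra hk
    push_neg at hk
    set b := x k with hb
    set D : Finset ℝ := (Finset.univ.image x).erase b with hD
    have hbmem : b ∈ Finset.univ.image x := Finset.mem_image_of_mem x (Finset.mem_univ k)
    have hDcard : D.card ≤ m - 1 := by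
      have h1 : (Finset.univ.image x).card ≤ m := le_trans Finset.card_image_le (by simp)
      have h2 : 0 < (Finset.univ.image x).card := Finset.card_pos.mpr ⟨b, hbmem⟩
      rw [hD, Finset.card_erase_of_mem hbmem]
      omega
    set s : ℝ := if R < b then -1 else 1 with hs
    have hlin : ∀ t : ℝ, |t| ≤ R → 0 < s * (t - b) := by
      intro t ht
      rcases abs_le.mp ht with ⟨ht1, ht2⟩
      by_cases hbR : R < b
      · rw [hs, if_pos hbR]; nlinarith
      · push_neg at hbR
        have hbneg : b < -R := by
          by_contra h'
          push_neg at h'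
          exact hk.not_ge (abs_le.mpr ⟨h', hbR⟩)
        rw [hs, if_neg (not_lt.mpr hbR)]; nlinarith
    set q : Polynomial ℝ := ∏ a ∈ D, (Polynomial.X - Polynomial.C a) ^ 2 with hq
    have hqeval : ∀ t, q.eval t = ∏ a ∈ D, (t - a) ^ 2 := by
      intro t; simp [hq, Polynomial.eval_prod]
    have hqnonneg : ∀ t, 0 ≤ q.eval t := by
      intro t; rw [hqeval]; exact Finset.prod_nonneg fun a _ => sq_nonneg _
    have hqdeg : q.natDegree ≤ 2 * m - 2 := by
      calc q.natDegree ≤ ∑ a ∈ D, ((Polynomial.X - Polynomial.C a) ^ 2).natDegree :=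
            Polynomial.natDegree_prod_le _ _
        _ = 2 * D.card := by
            rw [Finset.sum_congr rfl fun a _ => by
              rw [Polynomial.natDegree_pow, Polynomial.natDegree_X_sub_C]]
            simp [mul_comm]
        _ ≤ 2 * m - 2 := by omega
    set p : Polynomial ℝ := Polynomial.C s * (Polynomial.X - Polynomial.C b) * q with hp
    have hpeval : ∀ t, p.eval t = s * (t - b) * q.eval t := by
      intro t; simp [hp]
    have hpdeg : p.natDegree ≤ 2 * m - 1 := by
      calc p.natDegree ≤ (Polynomial.C s * (Polynomial.X - Polynomial.C b)).natDegree +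
            q.natDegree := Polynomial.natDegree_mul_le
        _ ≤ ((Polynomial.C s).natDegree + (Polynomial.X - Polynomial.C b).natDegree) +
            q.natDegree := by gcongr; exact Polynomial.natDegree_mul_le
        _ ≤ (0 + 1) + (2 * m - 2) := by
            gcongr
            · exact le_of_eq (Polynomial.natDegree_C s)
            · exact le_of_eq (Polynomial.natDegree_X_sub_C b)
        _ ≤ 2 * m - 1 := by omega
    have hpx : ∀ i, p.eval (x i) = 0 := by
      intro i
      by_cases hxi : x i = b
      · rw [hpeval, hxi]; ring
      · have hxiD : x i ∈ D := Finset.mem_erase.mpr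
          ⟨hxi, Finset.mem_image_of_mem x (Finset.mem_univ i)⟩
        have : q.eval (x i) = 0 := by
          rw [hqeval]; exact Finset.prod_eq_zero hxiD (by ring)
        rw [hpeval, this, mul_zero]
    have h1 := hexact p hpdeg
    rw [Finset.sum_eq_zero (fun i _ => by rw [hpx i, mul_zero])] at h1
    have hnn : ∀ i j, 0 ≤ v i j * p.eval (y i j) := by
      intro i j
      apply mul_nonneg (le_of_lt (hv i j))
      rw [hpeval]
      exact mul_nonneg (le_of_lt (hlin _ (hyR i j))) (hqnonneg _)
    have hzero : ∀ i j, v i j * p.eval (y i j) = 0 := by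
      intro i j
      have hsum0 : ∑ i, ∑ j, v i j * p.eval (y i j) = 0 := h1.symm
      have hi := (Finset.sum_eq_zero_iff_of_nonneg
        (fun i _ => Finset.sum_nonneg fun j _ => hnn i j)).mp hsum0 i (Finset.mem_univ i)
      exact (Finset.sum_eq_zero_iff_of_nonneg fun j _ => hnn i j).mp hi j (Finset.mem_univ j)
    have hyq : ∀ i j, q.eval (y i j) = 0 := by
      intro i j
      have h2 := hzero i j
      rw [hpeval] at h2
      have hv' := (hv i j).ne'
      have hl' := (hlin _ (hyR i j)).ne'
      rcases mul_eq_zero.mp h2 with h | h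
      · exact absurd h hv'
      · rcases mul_eq_zero.mp h with h' | h'
        · exact absurd h' hl'
        · exact h'
    have h3 := hexact q (le_trans hqdeg (by omega))
    have hrhs : ∑ i, ∑ j, v i j * q.eval (y i j) = 0 :=
      Finset.sum_eq_zero fun i _ => Finset.sum_eq_zero fun j _ => by rw [hyq i j, mul_zero]
    rw [hrhs] at h3
    have hqb : 0 < q.eval b := by
      rw [hqeval]
      apply Finset.prod_pos
      intro a ha
      have hab : a ≠ b := (Finset.mem_erase.mp ha).1
      have : b - a ≠ 0 := sub_ne_zero.mpr (Ne.symm hab)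
      exact lt_of_le_of_ne (sq_nonneg _) (Ne.symm (pow_ne_zero 2 this))
    have hpos : 0 < ∑ i, w i * q.eval (x i) := by
      have hterm : 0 < w k * q.eval b := mul_pos (hw k) hqb
      calc (0 : ℝ) < w k * q.eval (x k) := by rw [← hb]; exact hterm
        _ ≤ ∑ i, w i * q.eval (x i) :=
          Finset.single_le_sum (fun i _ => mul_nonneg (le_of_lt (hw i)) (hqnonneg _))
            (Finset.mem_univ k)
    rw [h3] at hpos
    exact lt_irrefl 0 hpos
  -- Step 2: build the node set T of cardinality 2m inside [-R, R].
  set S0 : Finset ℝ := (Finset.univ.image z) ∪ (Finset.univ.image x) with hS0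
  have hS0card : S0.card ≤ 2 * m := by
    calc S0.card ≤ (Finset.univ.image z).card + (Finset.univ.image x).card :=
          Finset.card_union_le _ _
      _ ≤ m + m := by
          gcongr <;> exact le_trans Finset.card_image_le (by simp)
      _ = 2 * m := by ring
  have hS0R : ∀ u ∈ S0, |u| ≤ R := by
    intro u hu
    rcases Finset.mem_union.mp hu with h | h
    · obtain ⟨i, _, rfl⟩ := Finset.mem_image.mp h; exact hzR i
    · obtain ⟨i, _, rfl⟩ := Finset.mem_image.mp h; exact hxR i
  have hinf : (Set.Icc (-R) R \ ↑S0).Infinite :=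
    (Set.Icc_infinite (by linarith)).diff S0.finite_toSet
  obtain ⟨T1, hT1sub, hT1card⟩ := hinf.exists_subset_card_eq (2 * m - S0.card)
  set T : Finset ℝ := S0 ∪ T1 with hT
  have hdisj : Disjoint S0 T1 := by
    rw [Finset.disjoint_left]
    intro a haS0 haT1
    exact (hT1sub haT1).2 haS0
  have hTcard : T.card = 2 * m := by
    rw [hT, Finset.card_union_of_disjoint hdisj, hT1card]; omega
  have hTR : ∀ u ∈ T, |u| ≤ R := by
    intro u hu
    rcases Finset.mem_union.mp hu with h | h
    · exact hS0R u h
    · exact abs_le.mpr (hT1sub h).1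
  have hzT : ∀ i, z i ∈ T := fun i =>
    Finset.mem_union_left _ (Finset.mem_union_left _ (Finset.mem_image_of_mem z (Finset.mem_univ i)))
  have hxT : ∀ i, x i ∈ T := fun i =>
    Finset.mem_union_left _ (Finset.mem_union_right _ (Finset.mem_image_of_mem x (Finset.mem_univ i)))
  -- Step 3: interpolation polynomial.
  set p : Polynomial ℝ := Lagrange.interpolate T id φ with hpdef
  have hpT : ∀ u ∈ T, p.eval u = φ u := by
    intro u hu
    have := Lagrange.eval_interpolate_at_node φ (Set.injOn_id _) hu
    exact this
  have hpdeg : p.natDegree ≤ 2 * m - 1 := by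
    by_cases hp0 : p = 0
    · simp [hp0]
    · have h1 : p.degree < (T.card : WithBot ℕ) :=
        Lagrange.degree_interpolate_lt φ (Set.injOn_id _)
      rw [hTcard] at h1
      have h2 : p.natDegree < 2 * m := (Polynomial.natDegree_lt_iff_degree_lt hp0).mpr h1
      omega
  -- Step 4: the nodal polynomial W.
  set W : Polynomial ℝ := ∏ a ∈ T, (Polynomial.X - Polynomial.C a) with hW
  have hWeval : ∀ t, W.eval t = ∏ a ∈ T, (t - a) := by
    intro t; simp [hW, Polynomial.eval_prod]
  have hWmonic : W.Monic :=
    Polynomial.monic_prod_of_monic _ _ fun a _ => Polynomial.monic_X_sub_C a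
  have hWdeg : W.natDegree = 2 * m := by
    rw [hW, Polynomial.natDegree_prod _ _ fun a _ => Polynomial.X_sub_C_ne_zero a]
    simp [Polynomial.natDegree_X_sub_C, hTcard]
  have hWtop : Polynomial.derivative^[2 * m] W =
      Polynomial.C ((Nat.factorial (2 * m) : ℝ)) := by
    rw [iterate_derivative_of_natDegree_le W (2 * m) hWdeg.le]
    have hc : W.coeff (2 * m) = 1 := by
      rw [← hWdeg]; exact hWmonic.coeff_natDegree
    rw [hc, mul_one]
  have hfactpos : (0 : ℝ) < (Nat.factorial (2 * m) : ℝ) :=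
    Nat.cast_pos.mpr (Nat.factorial_pos _)
  set B : ℝ := δ * (2 * R) ^ (2 * m - 1) * (1 / (Nat.factorial (2 * m) : ℝ)) * C with hB
  have hBnonneg : 0 ≤ B := by
    apply mul_nonneg
    apply mul_nonneg
    apply mul_nonneg hδ
    · positivity
    · positivity
    · exact hC0
  -- Step 5: pointwise interpolation error bound.
  have key : ∀ i j, |φ (y i j) - p.eval (y i j)| ≤ B := by
    intro i j
    by_cases hYT : y i j ∈ T
    · rw [hpT _ hYT]; simpa using hBnonneg
    · set Y := y i j with hY
      set c1 : ℝ := φ Y - p.eval Y with hc1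
      set c2 : ℝ := W.eval Y with hc2
      set q2 : Polynomial ℝ := Polynomial.C c1 * W + Polynomial.C c2 * p with hq2
      set g : ℝ → ℝ := fun t => q2.eval t - c2 * φ t with hg
      have hgzero : ∀ u ∈ insert Y T, g u = 0 := by
        intro u hu
        rcases Finset.mem_insert.mp hu with rfl | huT
        · simp only [hg, hq2, Polynomial.eval_add, Polynomial.eval_mul, Polynomial.eval_C,
            hc1, hc2]
          ring
        · have h1 : W.eval u = 0 := by
            rw [hWeval]
            exact Finset.prod_eq_zero huT (by ring)
          have h2 : p.eval u = φ u := hpT u huT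
          simp only [hg, hq2, Polynomial.eval_add, Polynomial.eval_mul, Polynomial.eval_C,
            h1, h2, mul_zero, zero_add]
          ring
      have hcard2 : (insert Y T).card = (2 * m - 1) + 2 := by
        rw [Finset.card_insert_of_notMem hYT, hTcard]; omega
      have e1 : (2 * m - 1) + 1 = 2 * m := by omega
      have hgsmooth : ContDiff ℝ ((2 * m - 1) + 1 : ℕ) g := by
        rw [e1]
        exact (polyeval_contDiff q2).sub (contDiff_const.mul hφ)
      obtain ⟨ξ, ⟨u1, hu1, hu1'⟩, ⟨u2, hu2, hu2'⟩, hξ0⟩ :=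
        aux_rolle_finset (2 * m - 1) g hgsmooth _ hcard2 hgzero
      rw [e1] at hξ0
      have hmemR : ∀ u ∈ insert Y T, |u| ≤ R := by
        intro u hu
        rcases Finset.mem_insert.mp hu with rfl | h
        · exact hyR i j
        · exact hTR u h
      have hξIoo : ξ ∈ Set.Ioo (-R) R := by
        constructor
        · have := (abs_le.mp (hmemR u1 hu1)).1; linarith
        · have := (abs_le.mp (hmemR u2 hu2)).2; linarith
      have hgderiv : iteratedDeriv (2 * m) g =
          fun t => (Polynomial.derivative^[2 * m] q2).eval t -
            c2 * iteratedDeriv (2 * m) φ t :=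
        iteratedDeriv_poly_sub_mul (2 * m) q2 c2 φ (by exact_mod_cast hφ)
      have hq2top : Polynomial.derivative^[2 * m] q2 =
          Polynomial.C (c1 * (Nat.factorial (2 * m) : ℝ)) := by
        rw [hq2, iterate_derivative_add', Polynomial.iterate_derivative_C_mul,
          Polynomial.iterate_derivative_C_mul, hWtop,
          Polynomial.iterate_derivative_eq_zero (lt_of_le_of_lt hpdeg (by omega)),
          mul_zero, add_zero, ← Polynomial.C_mul]
      have heq : c1 * (Nat.factorial (2 * m) : ℝ) = c2 * iteratedDeriv (2 * m) φ ξ := by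
        have h := hξ0
        rw [hgderiv] at h
        simp only [hq2top, Polynomial.eval_C] at h
        linarith
      have hc2bound : |c2| ≤ δ * (2 * R) ^ (2 * m - 1) := by
        rw [hc2, hWeval, Finset.abs_prod]
        rw [← Finset.mul_prod_erase _ _ (hzT i)]
        have h1 : |Y - z i| ≤ δ := by
          rw [abs_sub_comm]; exact hcluster i j
        have h2 : ∏ a ∈ T.erase (z i), |Y - a| ≤ (2 * R) ^ (2 * m - 1) := by
          calc ∏ a ∈ T.erase (z i), |Y - a| ≤ ∏ _a ∈ T.erase (z i), (2 * R) := by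
                apply Finset.prod_le_prod (fun a _ => abs_nonneg _)
                intro a ha
                have haT : a ∈ T := Finset.mem_of_mem_erase ha
                have h3 := abs_le.mp (hTR a haT)
                have h4 := abs_le.mp (hyR i j)
                rw [← hY] at h4
                apply abs_le.mpr
                constructor <;> [linarith [h3.2, h4.1]; linarith [h3.1, h4.2]]
            _ = (2 * R) ^ (2 * m - 1) := by
                rw [Finset.prod_const, Finset.card_erase_of_mem (hzT i), hTcard]
        exact mul_le_mul h1 h2 (Finset.prod_nonneg fun a _ => abs_nonneg _) hδ
      have hmain : |c1| * (Nat.factorial (2 * m) : ℝ) ≤ δ * (2 * R) ^ (2 * m - 1) * C := by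
        have h5 : |c1| * (Nat.factorial (2 * m) : ℝ) =
            |c2| * |iteratedDeriv (2 * m) φ ξ| := by
          have h6 := congrArg abs heq
          rw [abs_mul, abs_mul, Nat.abs_cast] at h6
          exact h6
        rw [h5]
        exact mul_le_mul hc2bound (hC ξ hξIoo) (abs_nonneg _)
          (by positivity)
      have : |c1| ≤ B := by
        rw [hB]
        rw [show δ * (2 * R) ^ (2 * m - 1) * (1 / (Nat.factorial (2 * m) : ℝ)) * C =
          (δ * (2 * R) ^ (2 * m - 1) * C) / (Nat.factorial (2 * m) : ℝ) by ring]
        rw [le_div_iff₀ hfactpos]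
        exact hmain
      exact this
  -- Step 6: assemble.
  have hsumEq : (∑ i, ∑ j, v i j * φ (y i j)) - ∑ i, w i * φ (x i)
      = ∑ i, ∑ j, v i j * (φ (y i j) - p.eval (y i j)) := by
    have hx' : ∑ i, w i * φ (x i) = ∑ i, w i * p.eval (x i) :=
      Finset.sum_congr rfl fun i _ => by rw [hpT _ (hxT i)]
    rw [hx', hexact p hpdeg, ← Finset.sum_sub_distrib]
    apply Finset.sum_congr rfl
    intro i _
    rw [← Finset.sum_sub_distrib]
    exact Finset.sum_congr rfl fun j _ => by ring
  rw [hsumEq]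
  calc |∑ i, ∑ j, v i j * (φ (y i j) - p.eval (y i j))|
      ≤ ∑ i, ∑ j, v i j * B := by
        refine (Finset.abs_sum_le_sum_abs _ _).trans (Finset.sum_le_sum fun i _ => ?_)
        refine (Finset.abs_sum_le_sum_abs _ _).trans (Finset.sum_le_sum fun j _ => ?_)
        rw [abs_mul, abs_of_pos (hv i j)]
        exact mul_le_mul_of_nonneg_left (key i j) (le_of_lt (hv i j))
    _ = B := by
        simp only [← Finset.sum_mul]
        rw [hvsum, one_mul]
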